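/- Let W₁ and W₂ be closed half-spaces in ℝ³ whose boundary planes Π₁ and Π₂ are distinct and intersect in a line L, with 0 in the interior of W₁ ∩ W₂, and set Aᵢ = Πᵢ ∩ W₃₋ᵢ. Assume the followed-edge condition: for i = 1, 2 the orthogonal projection oᵢ of 0 onto Πᵢ lies in Πᵢ ∩ int(W₃₋ᵢ) (the relative interior of Aᵢ). Let q ∈ L with q ≠ o_L, where o_L is the orthogonal projection of 0 onto L, and set u = (q − o_L)/‖q − o_L‖. Then ⟪q, u⟫ = ‖q − o_L‖ > 0, q + t·u ∈ L ⊆ A₁ ∪ A₂ for all t ≥ 0, and every unit vector v ≠ u for which there exists ε > 0 with q + t·v ∈ A₁ ∪ A₂ for all t ∈ [0, ε] satisfies ⟪q, v⟫ < ⟪q, u⟫. (This establishes that on a followed edge the unique direction of steepest ascent of the radial distance function is along the edge, away from the foot point o_L.) -/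

import Mathlib

open scoped RealInnerProductSpace

/-- Points in the interior of a half-space satisfy the strict inequality. -/
lemma interior_halfspace_strict {n x : EuclideanSpace ℝ (Fin 3)} {c : ℝ} (hn : n ≠ 0)
    (hx : x ∈ interior {y : EuclideanSpace ℝ (Fin 3) | ⟪n, y⟫ ≤ c}) : ⟪n, x⟫ < c := by
  obtain ⟨ε, hε, hball⟩ := Metric.isOpen_iff.mp isOpen_interior x hx
  have hn' : 0 < ‖n‖ := norm_pos_iff.mpr hn
  set s : ℝ := ε / (2 * ‖n‖) with hs
  have hspos : 0 < s := by positivity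
  have hmem : x + s • n ∈ {y : EuclideanSpace ℝ (Fin 3) | ⟪n, y⟫ ≤ c} := by
    refine interior_subset (hball ?_)
    rw [Metric.mem_ball, dist_eq_norm]
    have h1 : x + s • n - x = s • n := by abel
    rw [h1, norm_smul, Real.norm_eq_abs, abs_of_pos hspos]
    have : s * ‖n‖ = ε / 2 := by rw [hs]; field_simp
    rw [this]; linarith
  have hle : ⟪n, x + s • n⟫ ≤ c := hmem
  rw [inner_add_right, real_inner_smul_right, real_inner_self_eq_norm_sq] at hle
  nlinarith [mul_pos hspos (mul_pos hn' hn')]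

/-- on a followed edge, the unique direction of steepest ascent of the
radial distance function is along the edge line `L = B₁ ∩ B₂`, away from the foot point
`o_L` of the perpendicular from `0` to `L`. -/
theorem followed_edge_steepest_ascent
    (n₁ n₂ : EuclideanSpace ℝ (Fin 3)) (c₁ c₂ : ℝ) (hn₁ : n₁ ≠ 0) (hn₂ : n₂ ≠ 0)
    (W₁ W₂ B₁ B₂ A₁ A₂ : Set (EuclideanSpace ℝ (Fin 3)))
    (hW₁ : W₁ = {x | ⟪n₁, x⟫ ≤ c₁}) (hW₂ : W₂ = {x | ⟪n₂, x⟫ ≤ c₂})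
    (hB₁ : B₁ = {x | ⟪n₁, x⟫ = c₁}) (hB₂ : B₂ = {x | ⟪n₂, x⟫ = c₂})
    (hA₁ : A₁ = B₁ ∩ W₂) (hA₂ : A₂ = B₂ ∩ W₁)
    (hne : B₁ ≠ B₂) (hmeet : (B₁ ∩ B₂).Nonempty)
    (h0 : (0 : EuclideanSpace ℝ (Fin 3)) ∈ interior (W₁ ∩ W₂))
    -- `o₁`, `o₂` are the orthogonal projections of `0` onto `B₁`, `B₂`
    (o₁ o₂ : EuclideanSpace ℝ (Fin 3)) (ho₁ : o₁ ∈ B₁) (ho₂ : o₂ ∈ B₂)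
    (hperp₁ : ∀ x ∈ B₁, ⟪(0 : EuclideanSpace ℝ (Fin 3)) - o₁, x - o₁⟫ = 0)
    (hperp₂ : ∀ x ∈ B₂, ⟪(0 : EuclideanSpace ℝ (Fin 3)) - o₂, x - o₂⟫ = 0)
    -- the followed-edge condition: each `oᵢ` lies in the relative interior of `Aᵢ`
    (hfollow₁ : o₁ ∈ B₁ ∩ interior W₂) (hfollow₂ : o₂ ∈ B₂ ∩ interior W₁)
    -- `o_L` is the orthogonal projection of `0` onto the line `L = B₁ ∩ B₂`
    (oL : EuclideanSpace ℝ (Fin 3)) (hoL : oL ∈ B₁ ∩ B₂)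
    (hperpL : ∀ x ∈ B₁ ∩ B₂, ⟪(0 : EuclideanSpace ℝ (Fin 3)) - oL, x - oL⟫ = 0)
    (q : EuclideanSpace ℝ (Fin 3)) (hq : q ∈ B₁ ∩ B₂) (hqoL : q ≠ oL)
    (u : EuclideanSpace ℝ (Fin 3)) (hu : u = ‖q - oL‖⁻¹ • (q - oL)) :
    ⟪q, u⟫ = ‖q - oL‖ ∧ 0 < ‖q - oL‖ ∧
    (∀ t : ℝ, 0 ≤ t → q + t • u ∈ B₁ ∩ B₂) ∧ B₁ ∩ B₂ ⊆ A₁ ∪ A₂ ∧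
    (∀ v : EuclideanSpace ℝ (Fin 3), ‖v‖ = 1 → v ≠ u →
      (∃ ε > (0 : ℝ), ∀ t ∈ Set.Icc (0 : ℝ) ε, q + t • v ∈ A₁ ∪ A₂) →
      ⟪q, v⟫ < ⟪q, u⟫) := by
  subst hW₁ hW₂ hB₁ hB₂ hA₁ hA₂
  have hq₁ : ⟪n₁, q⟫ = c₁ := hq.1
  have hq₂ : ⟪n₂, q⟫ = c₂ := hq.2
  have hoL₁ : ⟪n₁, oL⟫ = c₁ := hoL.1
  have hoL₂ : ⟪n₂, oL⟫ = c₂ := hoL.2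
  have ho₁' : ⟪n₁, o₁⟫ = c₁ := ho₁
  have ho₂' : ⟪n₂, o₂⟫ = c₂ := ho₂
  have hN₁ : (0:ℝ) < ‖n₁‖ := norm_pos_iff.mpr hn₁
  have hN₂ : (0:ℝ) < ‖n₂‖ := norm_pos_iff.mpr hn₂
  have hdne : q - oL ≠ 0 := sub_ne_zero.mpr hqoL
  have hdpos : 0 < ‖q - oL‖ := norm_pos_iff.mpr hdne
  -- perpendicularity of oL
  have hperpq : ⟪oL, q - oL⟫ = 0 := by
    have h := hperpL q hq
    rw [zero_sub, inner_neg_left] at h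
    linarith
  -- part 1
  have hqd : ⟪q, q - oL⟫ = ‖q - oL‖ ^ 2 := by
    have h := inner_sub_left (𝕜 := ℝ) q oL (q - oL)
    rw [real_inner_self_eq_norm_sq] at h
    linarith
  have h1 : ⟪q, u⟫ = ‖q - oL‖ := by
    rw [hu, real_inner_smul_right q (q - oL) (‖q - oL‖⁻¹), hqd, pow_two, ← mul_assoc,
      inv_mul_cancel₀ (ne_of_gt hdpos), one_mul]
  -- part 3
  have hd₁ : ⟪n₁, q - oL⟫ = 0 := by rw [inner_sub_right, hq₁, hoL₁, sub_self]
  have hd₂ : ⟪n₂, q - oL⟫ = 0 := by rw [inner_sub_right, hq₂, hoL₂, sub_self]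
  have hu₁ : ⟪n₁, u⟫ = 0 := by rw [hu, real_inner_smul_right, hd₁, mul_zero]
  have hu₂ : ⟪n₂, u⟫ = 0 := by rw [hu, real_inner_smul_right, hd₂, mul_zero]
  have h3 : ∀ t : ℝ, 0 ≤ t → q + t • u ∈ {x | ⟪n₁, x⟫ = c₁} ∩ {x | ⟪n₂, x⟫ = c₂} := by
    intro t _
    refine ⟨?_, ?_⟩
    · show ⟪n₁, q + t • u⟫ = c₁
      rw [inner_add_right, real_inner_smul_right, hu₁, hq₁, mul_zero, add_zero]
    · show ⟪n₂, q + t • u⟫ = c₂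
      rw [inner_add_right, real_inner_smul_right, hu₂, hq₂, mul_zero, add_zero]
  -- part 4
  have h4 : {x | ⟪n₁, x⟫ = c₁} ∩ {x | ⟪n₂, x⟫ = c₂} ⊆
      ({x | ⟪n₁, x⟫ = c₁} ∩ {x | ⟪n₂, x⟫ ≤ c₂}) ∪ ({x | ⟪n₂, x⟫ = c₂} ∩ {x | ⟪n₁, x⟫ ≤ c₁}) := by
    intro x hx
    exact Or.inl ⟨hx.1, le_of_eq hx.2⟩
  -- positivity of c₁, c₂
  have hc₁ : 0 < c₁ := by
    have := interior_halfspace_strict hn₁ (interior_mono Set.inter_subset_left h0)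
    rwa [inner_zero_right] at this
  have hc₂ : 0 < c₂ := by
    have := interior_halfspace_strict hn₂ (interior_mono Set.inter_subset_right h0)
    rwa [inner_zero_right] at this
  -- o₁, o₂ explicit
  have key₁ : o₁ = (c₁ / ‖n₁‖ ^ 2) • n₁ := by
    set w := o₁ - (c₁ / ‖n₁‖ ^ 2) • n₁ with hw
    have hxB : (c₁ / ‖n₁‖ ^ 2) • n₁ ∈ {x | ⟪n₁, x⟫ = c₁} := by
      show ⟪n₁, (c₁ / ‖n₁‖ ^ 2) • n₁⟫ = c₁
      rw [real_inner_smul_right, real_inner_self_eq_norm_sq]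
      field_simp
    have hnw : ⟪n₁, w⟫ = 0 := by
      rw [hw, inner_sub_right, ho₁', real_inner_smul_right, real_inner_self_eq_norm_sq]
      field_simp
      ring
    have ho : ⟪o₁, w⟫ = 0 := by
      have h := hperp₁ _ hxB
      rw [zero_sub, inner_neg_left] at h
      have h2 : ((c₁ / ‖n₁‖ ^ 2) • n₁ - o₁ : EuclideanSpace ℝ (Fin 3)) = -w := by
        rw [hw]; abel
      rw [h2, inner_neg_right] at h
      linarith
    have hww : ⟪w, w⟫ = 0 := by
      rw [hw, inner_sub_left, ← hw, ho, real_inner_smul_left, hnw]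
      ring
    exact sub_eq_zero.mp (inner_self_eq_zero.mp hww)
  have key₂ : o₂ = (c₂ / ‖n₂‖ ^ 2) • n₂ := by
    set w := o₂ - (c₂ / ‖n₂‖ ^ 2) • n₂ with hw
    have hxB : (c₂ / ‖n₂‖ ^ 2) • n₂ ∈ {x | ⟪n₂, x⟫ = c₂} := by
      show ⟪n₂, (c₂ / ‖n₂‖ ^ 2) • n₂⟫ = c₂
      rw [real_inner_smul_right, real_inner_self_eq_norm_sq]
      field_simp
    have hnw : ⟪n₂, w⟫ = 0 := by
      rw [hw, inner_sub_right, ho₂', real_inner_smul_right, real_inner_self_eq_norm_sq]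
      field_simp
      ring
    have ho : ⟪o₂, w⟫ = 0 := by
      have h := hperp₂ _ hxB
      rw [zero_sub, inner_neg_left] at h
      have h2 : ((c₂ / ‖n₂‖ ^ 2) • n₂ - o₂ : EuclideanSpace ℝ (Fin 3)) = -w := by
        rw [hw]; abel
      rw [h2, inner_neg_right] at h
      linarith
    have hww : ⟪w, w⟫ = 0 := by
      rw [hw, inner_sub_left, ← hw, ho, real_inner_smul_left, hnw]
      ring
    exact sub_eq_zero.mp (inner_self_eq_zero.mp hww)
  obtain ⟨g, hg⟩ : ∃ g : ℝ, g = ⟪n₁, n₂⟫ := ⟨_, rfl⟩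
  have hcomm : ⟪n₂, n₁⟫ = g := by rw [hg, real_inner_comm]
  -- followed-edge inequalities
  have F1 : c₁ * g < c₂ * ‖n₁‖ ^ 2 := by
    have h := interior_halfspace_strict hn₂ hfollow₁.2
    rw [key₁, real_inner_smul_right, hcomm] at h
    rw [div_mul_eq_mul_div, div_lt_iff₀ (by positivity)] at h
    linarith
  have F2 : c₂ * g < c₁ * ‖n₂‖ ^ 2 := by
    have h := interior_halfspace_strict hn₁ hfollow₂.2
    rw [key₂, real_inner_smul_right, ← hg] at h
    rw [div_mul_eq_mul_div, div_lt_iff₀ (by positivity)] at h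
    linarith
  -- non-parallel normals
  have hnp : ∀ r : ℝ, n₂ ≠ r • n₁ := by
    intro r hr
    obtain ⟨p, hp₁, hp₂⟩ := hmeet
    have hp₁' : ⟪n₁, p⟫ = c₁ := hp₁
    have hp₂' : ⟪n₂, p⟫ = c₂ := hp₂
    have hr0 : r ≠ 0 := by
      rintro rfl
      rw [zero_smul] at hr
      exact hn₂ hr
    have hc : c₂ = r * c₁ := by
      rw [← hp₂', hr, real_inner_smul_left, hp₁']
    apply hne
    ext x
    simp only [Set.mem_setOf_eq, hr, real_inner_smul_left, hc]
    constructor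
    · intro h; rw [h]
    · intro h; exact mul_left_cancel₀ hr0 h
  have hlt1 : g < ‖n₁‖ * ‖n₂‖ := by
    rw [hg, inner_lt_norm_mul_iff_real]
    intro h
    apply hnp (‖n₂‖ / ‖n₁‖)
    rw [div_eq_inv_mul, mul_smul, h, smul_smul, inv_mul_cancel₀ (ne_of_gt hN₁), one_smul]
  have hlt2 : -g < ‖n₁‖ * ‖n₂‖ := by
    have h := @inner_lt_norm_mul_iff_real (EuclideanSpace ℝ (Fin 3)) _ _ n₁ (-n₂)
    rw [inner_neg_right, norm_neg, ← hg] at h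
    apply h.mpr
    intro heq
    apply hnp (-(‖n₂‖ / ‖n₁‖))
    have h2 : ‖n₁‖⁻¹ • (‖n₂‖ • n₁) = -n₂ := by
      rw [heq, smul_smul, inv_mul_cancel₀ (ne_of_gt hN₁), one_smul]
    rw [neg_smul, div_eq_inv_mul, mul_smul, h2, neg_neg]
  have hD : (0:ℝ) < ‖n₁‖ ^ 2 * ‖n₂‖ ^ 2 - g ^ 2 := by
    nlinarith [mul_pos (by linarith : (0:ℝ) < ‖n₁‖ * ‖n₂‖ - g)
      (by linarith : (0:ℝ) < ‖n₁‖ * ‖n₂‖ + g)]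
  obtain ⟨a, ha⟩ : ∃ a : ℝ, a = (c₁ * ‖n₂‖ ^ 2 - c₂ * g) / (‖n₁‖ ^ 2 * ‖n₂‖ ^ 2 - g ^ 2) :=
    ⟨_, rfl⟩
  obtain ⟨b, hb⟩ : ∃ b : ℝ, b = (c₂ * ‖n₁‖ ^ 2 - c₁ * g) / (‖n₁‖ ^ 2 * ‖n₂‖ ^ 2 - g ^ 2) :=
    ⟨_, rfl⟩
  have hapos : 0 < a := ha ▸ div_pos (by linarith) hD
  have hbpos : 0 < b := hb ▸ div_pos (by linarith) hD
  -- oL explicit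
  have hin₁ : ⟪n₁, a • n₁ + b • n₂⟫ = c₁ := by
    rw [inner_add_right, real_inner_smul_right, real_inner_smul_right,
      real_inner_self_eq_norm_sq, ← hg, ha, hb]
    rw [div_mul_eq_mul_div, div_mul_eq_mul_div, ← add_div, div_eq_iff hD.ne']
    ring
  have hin₂ : ⟪n₂, a • n₁ + b • n₂⟫ = c₂ := by
    rw [inner_add_right, real_inner_smul_right, real_inner_smul_right,
      real_inner_self_eq_norm_sq, hcomm, ha, hb]
    rw [div_mul_eq_mul_div, div_mul_eq_mul_div, ← add_div, div_eq_iff hD.ne']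
    ring
  have keyL : oL = a • n₁ + b • n₂ := by
    set w := a • n₁ + b • n₂ - oL with hw
    have hn₁w : ⟪n₁, w⟫ = 0 := by rw [hw, inner_sub_right, hin₁, hoL₁, sub_self]
    have hn₂w : ⟪n₂, w⟫ = 0 := by rw [hw, inner_sub_right, hin₂, hoL₂, sub_self]
    have hoLw : ⟪oL, w⟫ = 0 := by
      have h := hperpL (a • n₁ + b • n₂) ⟨hin₁, hin₂⟩
      rw [zero_sub, inner_neg_left, ← hw] at h
      linarith
    have hxw : ⟪a • n₁ + b • n₂, w⟫ = 0 := by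
      rw [inner_add_left, real_inner_smul_left, real_inner_smul_left, hn₁w, hn₂w]
      ring
    have hww : ⟪w, w⟫ = 0 := by
      rw [hw, inner_sub_left, ← hw, hxw, hoLw]; ring
    exact (sub_eq_zero.mp (inner_self_eq_zero.mp hww)).symm
  refine ⟨h1, hdpos, h3, h4, ?_⟩
  -- part 5
  rintro v hv hvu ⟨ε, hε, hmem⟩
  have hv' := hmem ε ⟨le_of_lt hε, le_refl ε⟩
  have hineq : ⟪n₁, v⟫ ≤ 0 ∧ ⟪n₂, v⟫ ≤ 0 := by
    rcases hv' with ⟨hB, hW⟩ | ⟨hB, hW⟩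
    · have hB' : ⟪n₁, q + ε • v⟫ = c₁ := hB
      have hW' : ⟪n₂, q + ε • v⟫ ≤ c₂ := hW
      rw [inner_add_right, real_inner_smul_right, hq₁] at hB'
      rw [inner_add_right, real_inner_smul_right, hq₂] at hW'
      constructor
      · have h' : ε * ⟪n₁, v⟫ = ε * 0 := by rw [mul_zero]; linarith
        exact le_of_eq (mul_left_cancel₀ (ne_of_gt hε) h')
      · have h' : ε * ⟪n₂, v⟫ ≤ ε * 0 := by rw [mul_zero]; linarith
        exact le_of_mul_le_mul_left h' hε
    · have hB' : ⟪n₂, q + ε • v⟫ = c₂ := hB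
      have hW' : ⟪n₁, q + ε • v⟫ ≤ c₁ := hW
      rw [inner_add_right, real_inner_smul_right, hq₂] at hB'
      rw [inner_add_right, real_inner_smul_right, hq₁] at hW'
      constructor
      · have h' : ε * ⟪n₁, v⟫ ≤ ε * 0 := by rw [mul_zero]; linarith
        exact le_of_mul_le_mul_left h' hε
      · have h' : ε * ⟪n₂, v⟫ = ε * 0 := by rw [mul_zero]; linarith
        exact le_of_eq (mul_left_cancel₀ (ne_of_gt hε) h')
  have hoLv : ⟪oL, v⟫ ≤ 0 := by
    rw [keyL, inner_add_left, real_inner_smul_left, real_inner_smul_left]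
    have t1 : a * ⟪n₁, v⟫ ≤ 0 := mul_nonpos_iff.mpr (Or.inl ⟨hapos.le, hineq.1⟩)
    have t2 : b * ⟪n₂, v⟫ ≤ 0 := mul_nonpos_iff.mpr (Or.inl ⟨hbpos.le, hineq.2⟩)
    linarith
  have hdv : ⟪q - oL, v⟫ < ‖q - oL‖ := by
    have h := @inner_lt_norm_mul_iff_real (EuclideanSpace ℝ (Fin 3)) _ _ (q - oL) v
    rw [hv, mul_one] at h
    apply h.mpr
    intro heq
    apply hvu
    rw [one_smul] at heq
    have h3' : u = ‖q - oL‖⁻¹ • (‖q - oL‖ • v) := by rw [← heq]; exact hu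
    rw [h3', smul_smul, inv_mul_cancel₀ (ne_of_gt hdpos), one_smul]
  have hqv : ⟪q, v⟫ = ⟪oL, v⟫ + ⟪q - oL, v⟫ := by
    rw [inner_sub_left]; ring
  rw [h1, hqv]
  linarith
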